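/- (AGSP implies entanglement spread bound; Theorem 'Bounding entanglement spread using AGSP', heavy part) Let |Ω⟩ ∈ ℂ^{d_A}⊗ℂ^{d_B} be a unit vector with Schmidt coefficients λ_1 ≥ λ_2 ≥ ... in descending order. Fix ε ∈ (0,1), let b be the smallest integer with ε' := ∑_{i<b} λ_i ≥ ε (assume such b exists and b ≥ 2), and let |Ω_heavy⟩ = ∑_{i<b} √(λ_i/ε') |i⟩_A|i⟩_B in the Schmidt basis. Suppose K is an operator on ℂ^{p}⊗ℂ^{p}⊗ℂ^{d_A}⊗ℂ^{d_B} such that ‖K(|Φ_p⟩⊗|v⟩) − |Φ_p⟩⊗|Ω⟩⟨Ω|v⟩‖ ≤ Δ for all unit vectors |v⟩, and that K maps any vector of Schmidt rank s (across the A:B cut including the Φ_p registers) to a vector of Schmidt rank at most D·s. If Δ < √ε'/4, then ∑_{i=1}^{(b-1)D} λ_i ≥ (1 − 2Δ/√ε')². -/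

import Mathlib

open Matrix

/-- The Euclidean (ℓ²) norm of a finitely-supported complex vector. -/
noncomputable def enorm2 {ι : Type*} [Fintype ι] (v : ι → ℂ) : ℝ :=
  Real.sqrt (∑ i, ‖v i‖ ^ 2)

set_option maxHeartbeats 1000000

open Matrix Module Submodule in
lemma rank_le_of_cols_zero {m n : Type*} [Fintype m] [Fintype n] [DecidableEq n]
    (A : Matrix m n ℂ) (T : Finset n) (h : ∀ j ∉ T, Aᵀ j = 0) :
    A.rank ≤ T.card := by
  rw [Matrix.rank_eq_finrank_span_cols]
  have h1 : Submodule.span ℂ (Set.range Aᵀ) ≤ Submodule.span ℂ ((T.image Aᵀ : Finset (m → ℂ)) : Set (m → ℂ)) := by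
    refine Submodule.span_le.2 ?_
    rintro _ ⟨j, rfl⟩
    by_cases hj : j ∈ T
    · exact Submodule.subset_span (Finset.mem_coe.2 (Finset.mem_image_of_mem _ hj))
    · rw [h j hj]; exact Submodule.zero_mem _
  calc finrank ℂ (Submodule.span ℂ (Set.range Aᵀ))
      ≤ finrank ℂ (Submodule.span ℂ ((T.image Aᵀ : Finset (m → ℂ)) : Set (m → ℂ))) :=
        Submodule.finrank_mono h1
    _ ≤ (T.image Aᵀ).card := finrank_span_finset_le_card _
    _ ≤ T.card := Finset.card_image_le


lemma card_filter_fin_lt {d m : ℕ} (hm : m ≤ d) :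
    (Finset.univ.filter (fun i : Fin d => (i:ℕ) < m)).card = m := by
  have : (Finset.univ.filter (fun i : Fin d => (i:ℕ) < m)) =
      (Finset.range m).attachFin (fun x hx => lt_of_lt_of_le (Finset.mem_range.1 hx) hm) := by
    ext i
    simp [Finset.mem_attachFin]
  rw [this, Finset.card_attachFin, Finset.card_range]

lemma bathtub {d : ℕ} (lam : Fin d → ℝ) (hanti : Antitone lam) (hnn : ∀ i, 0 ≤ lam i)
    (p : ℝ) (hp : 0 ≤ p) (m : ℕ) (s : Fin d → ℝ) (h0 : ∀ i, 0 ≤ s i) (h1 : ∀ i, s i ≤ p)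
    (hsum : ∑ i, s i ≤ p * m) :
    ∑ i, lam i * s i ≤ p * ∑ i ∈ Finset.univ.filter (fun i : Fin d => (i:ℕ) < m), lam i := by
  by_cases hm : d ≤ m
  · have hfull : Finset.univ.filter (fun i : Fin d => (i:ℕ) < m) = Finset.univ := by
      ext i; simpa using lt_of_lt_of_le i.isLt hm
    rw [hfull, Finset.mul_sum]
    exact Finset.sum_le_sum fun i _ => by
      rw [mul_comm p (lam i)]; exact mul_le_mul_of_nonneg_left (h1 i) (hnn i)
  · push_neg at hm
    set F := Finset.univ.filter (fun i : Fin d => (i:ℕ) < m) with hF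
    set i0 : Fin d := ⟨m, hm⟩
    have hc0 : 0 ≤ lam i0 := hnn i0
    have hsplit : ∑ i, lam i * s i = ∑ i ∈ F, lam i * s i + ∑ i ∈ Fᶜ, lam i * s i :=
      (Finset.sum_add_sum_compl F _).symm
    have hG : ∑ i ∈ Fᶜ, lam i * s i ≤ lam i0 * ∑ i ∈ Fᶜ, s i := by
      rw [Finset.mul_sum]
      refine Finset.sum_le_sum fun i hi => ?_
      have : ¬ ((i:ℕ) < m) := by simpa [hF] using hi
      have hle : lam i ≤ lam i0 := hanti (by simpa [i0, Fin.le_def] using not_lt.1 this)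
      exact mul_le_mul_of_nonneg_right hle (h0 i)
    have hGs : ∑ i ∈ Fᶜ, s i ≤ p * m - ∑ i ∈ F, s i := by
      have := Finset.sum_add_sum_compl F s
      linarith
    have hcard : (F.card : ℝ) = m := by rw [hF, card_filter_fin_lt hm.le]
    have key : ∑ i ∈ F, lam i * s i + lam i0 * (p * m - ∑ i ∈ F, s i) ≤ p * ∑ i ∈ F, lam i := by
      have hpm : p * m = ∑ _i ∈ F, p := by rw [Finset.sum_const, nsmul_eq_mul, card_filter_fin_lt hm.le, mul_comm]
      rw [hpm, ← Finset.sum_sub_distrib, Finset.mul_sum, Finset.mul_sum, ← Finset.sum_add_distrib]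
      refine Finset.sum_le_sum fun i hi => ?_
      have him : (i:ℕ) < m := by simpa [hF] using hi
      have hle : lam i0 ≤ lam i := hanti (by simpa [i0, Fin.le_def] using him.le)
      nlinarith [h1 i, h0 i, hnn i]
    calc ∑ i, lam i * s i ≤ ∑ i ∈ F, lam i * s i + lam i0 * ∑ i ∈ Fᶜ, s i := by
          rw [hsplit]; linarith
      _ ≤ ∑ i ∈ F, lam i * s i + lam i0 * (p * m - ∑ i ∈ F, s i) := by
          have := mul_le_mul_of_nonneg_left hGs hc0; linarith
      _ ≤ p * ∑ i ∈ F, lam i := key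

open Module Finset Matrix
open scoped InnerProductSpace ComplexConjugate

lemma ey {ι : Type*} [Fintype ι] [DecidableEq ι] (μ : ι → ℝ) (hμ : ∀ i, 0 ≤ μ i)
    (X : Matrix ι ι ℂ) :
    ∃ c : ι → ℝ, (∀ j, 0 ≤ c j) ∧ (∀ j, c j ≤ 1) ∧ (∑ j, c j ≤ (X.rank : ℝ)) ∧
      ∑ j, μ j ^ 2 * (1 - c j) ≤
        ∑ j, ∑ i, ‖X i j - if i = j then (μ j : ℂ) else 0‖ ^ 2 := by
  classical
  set Eu := EuclideanSpace ℂ ι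
  set col : ι → Eu := fun j => (WithLp.equiv 2 (ι → ℂ)).symm (fun i => X i j) with hcol
  set V : Submodule ℂ Eu := Submodule.span ℂ (Set.range col) with hV
  -- finrank V = rank X
  have hVr : finrank ℂ V = X.rank := by
    rw [Matrix.rank_eq_finrank_span_cols]
    have h0 : V = Submodule.map ((WithLp.linearEquiv 2 ℂ (ι → ℂ)).symm : (ι → ℂ) →ₗ[ℂ] Eu)
        (Submodule.span ℂ (Set.range Xᵀ)) := by
      rw [hV, Submodule.map_span]
      congr 1
      ext x
      constructor
      · rintro ⟨j, rfl⟩; exact ⟨Xᵀ j, ⟨j, rfl⟩, rfl⟩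
      · rintro ⟨_, ⟨j, rfl⟩, rfl⟩; exact ⟨j, rfl⟩
    rw [h0]
    exact LinearEquiv.finrank_map_eq _ _
  haveI : FiniteDimensional ℂ V := inferInstance
  set k := finrank ℂ V with hk
  set bb := stdOrthonormalBasis ℂ V with hbb
  have hon : Orthonormal ℂ (fun t => ((bb t : V) : Eu)) :=
    bb.orthonormal.comp_linearIsometry V.subtypeₗᵢ
  set c : ι → ℝ := fun j => ∑ t, ‖⟪((bb t : V) : Eu), EuclideanSpace.single j (1:ℂ)⟫_ℂ‖ ^ 2 with hc
  have hc0 : ∀ j, 0 ≤ c j := fun j => Finset.sum_nonneg fun t _ => by positivity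
  have hc1 : ∀ j, c j ≤ 1 := by
    intro j
    have h := hon.sum_inner_products_le (s := Finset.univ) (EuclideanSpace.single j (1:ℂ))
    calc c j ≤ ‖EuclideanSpace.single j (1:ℂ)‖ ^ 2 := h
      _ = 1 := by rw [EuclideanSpace.norm_single]; norm_num
  have hcsum : ∑ j, c j = (k : ℝ) := by
    rw [hc, Finset.sum_comm]
    have key : ∀ t : Fin k, ∑ j, ‖⟪((bb t : V) : Eu), EuclideanSpace.single j (1:ℂ)⟫_ℂ‖ ^ 2 = 1 := by
      intro t
      have hnorm : ‖((bb t : V) : Eu)‖ = 1 := hon.1 t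
      have h4 : ∀ j, ‖⟪((bb t : V) : Eu), EuclideanSpace.single j (1:ℂ)⟫_ℂ‖ ^ 2
          = ‖((bb t : V) : Eu) j‖ ^ 2 := by
        intro j
        rw [EuclideanSpace.inner_single_right]
        simp
      rw [Finset.sum_congr rfl fun j _ => h4 j]
      have h5 := EuclideanSpace.norm_eq ((bb t : V) : Eu)
      rw [hnorm] at h5
      have h3 : (0:ℝ) ≤ ∑ j, ‖((bb t : V) : Eu) j‖ ^ 2 :=
        Finset.sum_nonneg fun j _ => by positivity
      nlinarith [Real.sq_sqrt h3, Real.sqrt_nonneg (∑ j, ‖((bb t : V) : Eu) j‖ ^ 2)]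
    rw [Finset.sum_congr rfl fun t _ => key t]
    simp
  refine ⟨c, hc0, hc1, by rw [hcsum, hVr], ?_⟩
  -- per-column inequality
  refine Finset.sum_le_sum fun j _ => ?_
  set y : Eu := ((μ j : ℝ) : ℂ) • EuclideanSpace.single j (1:ℂ) with hy
  set P := V.orthogonalProjection with hP
  have hxV : col j ∈ V := Submodule.subset_span ⟨j, rfl⟩
  set z : Eu := col j - y with hz
  -- RHS = ‖z‖^2
  have hrhs : ∑ i, ‖X i j - if i = j then (μ j : ℂ) else 0‖ ^ 2 = ‖z‖ ^ 2 := by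
    have hznorm := EuclideanSpace.norm_eq z
    have hzi : ∀ i, ‖z i‖ = ‖X i j - if i = j then (μ j : ℂ) else 0‖ := by
      intro i
      have h6 : z i = X i j - if i = j then (μ j : ℂ) else 0 := by
        have hz0 : z i = X i j - ((μ j : ℝ) : ℂ) * EuclideanSpace.single j (1:ℂ) i := rfl
        rw [hz0, EuclideanSpace.single_apply]
        by_cases h : i = j <;> simp [h]
      rw [h6]
    rw [hznorm]
    rw [Real.sq_sqrt (Finset.sum_nonneg fun i _ => by positivity)]
    exact (Finset.sum_congr rfl fun i _ => by rw [hzi i]).symm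
  rw [hrhs]
  -- Pythagoras
  have hpyth : ∀ v : Eu, ‖v‖ ^ 2 = ‖(P v : Eu)‖ ^ 2 + ‖v - P v‖ ^ 2 := by
    intro v
    have horth : ⟪(v - P v : Eu), (P v : Eu)⟫_ℂ = 0 :=
      V.starProjection_inner_eq_zero v _ (P v).2
    have h7 := norm_add_sq_eq_norm_sq_add_norm_sq_of_inner_eq_zero (𝕜 := ℂ) (P v : Eu) (v - P v)
      (by rw [← inner_conj_symm, horth, map_zero])
    have h8 : ‖(P v : Eu) + (v - P v)‖ ^ 2 = ‖(P v : Eu)‖ ^ 2 + ‖v - P v‖ ^ 2 := by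
      simpa [pow_two] using h7
    calc ‖v‖ ^ 2 = ‖(P v : Eu) + (v - P v)‖ ^ 2 := by rw [add_sub_cancel]
      _ = _ := h8
  have hzP : z - (P z : Eu) = (P y : Eu) - y := by
    have hPx : (P (col j) : Eu) = col j := Submodule.starProjection_eq_self_iff.2 hxV
    have h9 : (P z : Eu) = (P (col j) : Eu) - (P y : Eu) := by rw [hz, map_sub]; rfl
    rw [hz, h9, hPx]; abel
  have step1 : ‖y - (P y : Eu)‖ ^ 2 ≤ ‖z‖ ^ 2 := by
    rw [hpyth z, hzP, norm_sub_rev y]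
    exact le_add_of_nonneg_left (by positivity)
  -- ‖P y‖^2 = μ j ^ 2 * c j
  have hPy : ‖(P y : Eu)‖ ^ 2 = μ j ^ 2 * c j := by
    have hrepr : ∀ t, bb.repr (P y) t = ⟪((bb t : V) : Eu), y⟫_ℂ := by
      intro t
      rw [bb.repr_apply_apply]
      exact Submodule.inner_orthogonalProjection_eq_of_mem_left (K := V) (bb t) y
    have h1 : ‖(P y : Eu)‖ = ‖bb.repr (P y)‖ := by
      rw [Submodule.norm_coe, bb.repr.norm_map]
    have h2 : ‖bb.repr (P y)‖ ^ 2 = ∑ t, ‖bb.repr (P y) t‖ ^ 2 := by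
      rw [EuclideanSpace.norm_eq]
      exact Real.sq_sqrt (Finset.sum_nonneg fun t _ => by positivity)
    rw [h1, h2, hc, Finset.mul_sum]
    refine Finset.sum_congr rfl fun t _ => ?_
    rw [hrepr t, hy, inner_smul_right, norm_mul, mul_pow]
    congr 1
    simp [abs_of_nonneg (hμ j)]
  have hyn : ‖y‖ ^ 2 = μ j ^ 2 := by
    rw [hy, norm_smul, EuclideanSpace.norm_single, norm_one, mul_one, Complex.norm_real,
      Real.norm_eq_abs, abs_of_nonneg (hμ j)]
  have h11 := hpyth y
  nlinarith [step1]

/-- AGSP implies spread bound, heavy part: `Ω` has Schmidt coefficients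
`lam` (descending, written in its Schmidt basis so its coefficient matrix is
`diag(√lam)`), `ε ∈ (0,1)`, `b ≥ 2` is the least integer with `ε' = ∑_{i<b} lam i ≥ ε`.
If `K` is an EPR-assisted AGSP with error `Δ` and Schmidt-rank amplification factor `D`,
and `Δ < √ε'/4`, then the sum of the largest `(b−1)D` Schmidt coefficients is at least
`(1 − 2Δ/√ε')²`. (Indices `i` below are 1-based via `i.val + 1`.) -/
theorem stmt_8 {d p : ℕ} (hd : 0 < d) (hp : 0 < p)
    (lam : Fin d → ℝ) (hanti : Antitone lam) (hnn : ∀ i, 0 ≤ lam i)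
    (hsum : ∑ i, lam i = 1)
    (ε : ℝ) (hε0 : 0 < ε) (hε1 : ε < 1)
    (b D : ℕ) (hb2 : 2 ≤ b) (hbd : b ≤ d + 1)
    (hbmin : ∀ b'' : ℕ, b'' < b →
      ∑ i ∈ Finset.univ.filter (fun i : Fin d => (i : ℕ) + 1 < b''), lam i < ε)
    (hb : ε ≤ ∑ i ∈ Finset.univ.filter (fun i : Fin d => (i : ℕ) + 1 < b), lam i)
    (K : Matrix ((Fin p × Fin d) × (Fin p × Fin d)) ((Fin p × Fin d) × (Fin p × Fin d)) ℂ)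
    (Δ : ℝ)
    -- `K (Φ_p ⊗ v)` is `Δ`-close to `Φ_p ⊗ Ω ⟨Ω|v⟩` for every unit vector `v`
    (hK : ∀ v : Fin d × Fin d → ℂ, enorm2 v = 1 →
      enorm2 (fun x : (Fin p × Fin d) × (Fin p × Fin d) =>
          K.mulVec (fun y => (if y.1.1 = y.2.1 then (((Real.sqrt p)⁻¹ : ℝ) : ℂ) else 0)
              * v (y.1.2, y.2.2)) x
            - (∑ i, ((Real.sqrt (lam i) : ℝ) : ℂ) * v (i, i)) *
                ((if x.1.1 = x.2.1 then (((Real.sqrt p)⁻¹ : ℝ) : ℂ) else 0) *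
                  (if x.1.2 = x.2.2 then ((Real.sqrt (lam x.1.2) : ℝ) : ℂ) else 0)))
        ≤ Δ)
    -- `K` multiplies Schmidt ranks (across the cut including the EPR registers) by ≤ `D`
    (hrank : ∀ v : ((Fin p × Fin d) × (Fin p × Fin d)) → ℂ,
      (Matrix.of fun a b' => K.mulVec v (a, b')).rank
        ≤ D * (Matrix.of fun a b' => v (a, b')).rank)
    (hΔ : Δ < Real.sqrt
      (∑ i ∈ Finset.univ.filter (fun i : Fin d => (i : ℕ) + 1 < b), lam i) / 4) :
    (1 - 2 * Δ / Real.sqrt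
        (∑ i ∈ Finset.univ.filter (fun i : Fin d => (i : ℕ) + 1 < b), lam i)) ^ 2
      ≤ ∑ i ∈ Finset.univ.filter (fun i : Fin d => (i : ℕ) < (b - 1) * D), lam i := by
  classical
  set S := Finset.univ.filter (fun i : Fin d => (i:ℕ)+1 < b) with hS
  set E := ∑ i ∈ S, lam i with hE
  have hE0 : 0 < E := lt_of_lt_of_le hε0 hb
  have hsE : 0 < Real.sqrt E := Real.sqrt_pos.2 hE0
  -- the heavy vector
  set w : Fin d × Fin d → ℂ :=
    fun q => if q.1 = q.2 ∧ (q.1:ℕ)+1 < b then ((Real.sqrt (lam q.1 / E) : ℝ) : ℂ) else 0 with hw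
  have hw2 : ∀ q, ‖w q‖ ^ 2
      = if q.1 = q.2 ∧ (q.1:ℕ)+1 < b then lam q.1 / E else 0 := by
    intro q
    have hwq : w q = if q.1 = q.2 ∧ (q.1:ℕ)+1 < b then ((Real.sqrt (lam q.1 / E) : ℝ) : ℂ) else 0 := rfl
    rw [hwq]
    by_cases h : q.1 = q.2 ∧ (q.1:ℕ)+1 < b
    · rw [if_pos h, if_pos h, Complex.norm_real, Real.norm_eq_abs, abs_of_nonneg (Real.sqrt_nonneg _),
        Real.sq_sqrt (div_nonneg (hnn _) hE0.le)]
    · rw [if_neg h, if_neg h]; simp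
  have hwsum : ∑ q, ‖w q‖ ^ 2 = 1 := by
    rw [Finset.sum_congr rfl fun q _ => hw2 q, Fintype.sum_prod_type]
    have hinner : ∀ i : Fin d,
        (∑ j, if i = j ∧ (i:ℕ)+1 < b then lam i / E else 0)
          = if (i:ℕ)+1 < b then lam i / E else 0 := by
      intro i
      simp [ite_and]
    rw [Finset.sum_congr rfl fun i _ => hinner i, ← Finset.sum_filter, ← hS, ← Finset.sum_div,
      ← hE, div_self hE0.ne']
  have hwn : enorm2 w = 1 := by rw [enorm2, hwsum, Real.sqrt_one]
  -- the overlap scalar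
  have hscal : (∑ i, ((Real.sqrt (lam i) : ℝ) : ℂ) * w (i, i)) = ((Real.sqrt E : ℝ) : ℂ) := by
    have hterm : ∀ i : Fin d, ((Real.sqrt (lam i) : ℝ) : ℂ) * w (i, i)
        = (((if (i:ℕ)+1 < b then lam i / Real.sqrt E else 0 : ℝ)) : ℂ) := by
      intro i
      have hwq : w (i, i) = if (i:Fin d) = i ∧ (i:ℕ)+1 < b
          then ((Real.sqrt (lam i / E) : ℝ) : ℂ) else 0 := rfl
      rw [hwq]
      by_cases h : (i:ℕ)+1 < b
      · rw [if_pos ⟨rfl, h⟩, if_pos h, ← Complex.ofReal_mul]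
        congr 1
        rw [Real.sqrt_div (hnn i), ← mul_div_assoc, Real.mul_self_sqrt (hnn i)]
      · rw [if_neg (fun hc => h hc.2), if_neg h, mul_zero, Complex.ofReal_zero]
    rw [Finset.sum_congr rfl fun i _ => hterm i, ← Complex.ofReal_sum]
    congr 1
    rw [← Finset.sum_filter, ← hS, ← Finset.sum_div, ← hE, Real.div_sqrt]
  -- apply hK
  set v0 : ((Fin p × Fin d) × (Fin p × Fin d)) → ℂ :=
    fun y => (if y.1.1 = y.2.1 then (((Real.sqrt p)⁻¹ : ℝ) : ℂ) else 0) * w (y.1.2, y.2.2)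
    with hv0
  have hKw := hK w hwn
  set μ : (Fin p × Fin d) → ℝ :=
    fun a => Real.sqrt E * (Real.sqrt p)⁻¹ * Real.sqrt (lam a.2) with hμdef
  have hμ0 : ∀ a, 0 ≤ μ a := by
    intro a
    rw [hμdef]
    positivity
  set X : Matrix (Fin p × Fin d) (Fin p × Fin d) ℂ :=
    Matrix.of fun a b' => K.mulVec v0 (a, b') with hX
  have hdiag : ∀ x : (Fin p × Fin d) × (Fin p × Fin d),
      ((Real.sqrt E : ℝ) : ℂ) * ((if x.1.1 = x.2.1 then (((Real.sqrt p)⁻¹ : ℝ) : ℂ) else 0) *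
        (if x.1.2 = x.2.2 then ((Real.sqrt (lam x.1.2) : ℝ) : ℂ) else 0))
      = if x.1 = x.2 then ((μ x.2 : ℝ) : ℂ) else 0 := by
    intro x
    by_cases h1 : x.1.1 = x.2.1
    · by_cases h2 : x.1.2 = x.2.2
      · rw [if_pos h1, if_pos h2, if_pos (Prod.ext h1 h2), hμdef]
        rw [h2]
        push_cast
        ring
      · rw [if_neg h2, if_neg (fun hx => h2 (congrArg Prod.snd hx))]
        ring
    · rw [if_neg h1, if_neg (fun hx => h1 (congrArg Prod.fst hx))]
      ring
  have hfun : (fun x : (Fin p × Fin d) × (Fin p × Fin d) =>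
      K.mulVec v0 x - (∑ i, ((Real.sqrt (lam i) : ℝ) : ℂ) * w (i, i)) *
        ((if x.1.1 = x.2.1 then (((Real.sqrt p)⁻¹ : ℝ) : ℂ) else 0) *
          (if x.1.2 = x.2.2 then ((Real.sqrt (lam x.1.2) : ℝ) : ℂ) else 0)))
      = fun x => X x.1 x.2 - if x.1 = x.2 then ((μ x.2 : ℝ) : ℂ) else 0 := by
    funext x
    rw [hscal, hdiag x]
    rfl
  rw [hfun] at hKw
  -- Δ ≥ 0 and the Frobenius bound
  have hΔ0 : 0 ≤ Δ := le_trans (Real.sqrt_nonneg _) hKw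
  have hfrob : ∑ j, ∑ i, ‖X i j - if i = j then ((μ j : ℝ) : ℂ) else 0‖ ^ 2 ≤ Δ ^ 2 := by
    have hnncore : (0:ℝ) ≤ ∑ x : (Fin p × Fin d) × (Fin p × Fin d),
        ‖X x.1 x.2 - if x.1 = x.2 then ((μ x.2 : ℝ) : ℂ) else 0‖ ^ 2 :=
      Finset.sum_nonneg fun x _ => by positivity
    have h1 : ∑ x : (Fin p × Fin d) × (Fin p × Fin d),
        ‖X x.1 x.2 - if x.1 = x.2 then ((μ x.2 : ℝ) : ℂ) else 0‖ ^ 2 ≤ Δ ^ 2 := by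
      have := pow_le_pow_left₀ (Real.sqrt_nonneg _) hKw 2
      rwa [Real.sq_sqrt hnncore] at this
    calc ∑ j, ∑ i, ‖X i j - if i = j then ((μ j : ℝ) : ℂ) else 0‖ ^ 2
        = ∑ i, ∑ j, ‖X i j - if i = j then ((μ j : ℝ) : ℂ) else 0‖ ^ 2 :=
          Finset.sum_comm
      _ = ∑ x : (Fin p × Fin d) × (Fin p × Fin d),
            ‖X x.1 x.2 - if x.1 = x.2 then ((μ x.2 : ℝ) : ℂ) else 0‖ ^ 2 :=
          (Fintype.sum_prod_type
            (fun x : (Fin p × Fin d) × (Fin p × Fin d) =>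
              ‖X x.1 x.2 - if x.1 = x.2 then ((μ x.2 : ℝ) : ℂ) else 0‖ ^ 2)).symm
      _ ≤ Δ ^ 2 := h1
  -- rank bound
  have hrk : (X.rank : ℝ) ≤ (p : ℝ) * (((b - 1) * D : ℕ) : ℝ) := by
    have hr0 : (Matrix.of fun a b' => v0 (a, b')).rank ≤ p * (b - 1) := by
      have := rank_le_of_cols_zero (Matrix.of fun a b' => v0 (a, b'))
        ((Finset.univ : Finset (Fin p)) ×ˢ S) ?_
      · refine le_trans this ?_
        rw [Finset.card_product, Finset.card_univ, Fintype.card_fin]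
        have hScard : S.card = b - 1 := by
          have hSeq : S = Finset.univ.filter (fun i : Fin d => (i:ℕ) < b - 1) := by
            rw [hS]
            ext i
            simp only [Finset.mem_filter, Finset.mem_univ, true_and]
            omega
          rw [hSeq, card_filter_fin_lt (by omega)]
        rw [hScard]
      · intro c hc
        have hc2 : ¬ ((c.2 : ℕ) + 1 < b) := by
          intro hcon
          exact hc (Finset.mem_product.2 ⟨Finset.mem_univ _, by rw [hS]; simp [hcon]⟩)
        funext a
        show v0 (a, c) = 0
        rw [hv0, hw]
        by_cases h : a.2 = c.2
        · simp [h, hc2]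
        · simp [h]
    have h6 := le_trans (hrank v0) (Nat.mul_le_mul_left D hr0)
    have hnat : D * (p * (b - 1)) = p * ((b - 1) * D) := by ring
    rw [hnat] at h6
    calc (X.rank : ℝ) ≤ ((p * ((b - 1) * D) : ℕ) : ℝ) := by exact_mod_cast h6
      _ = (p : ℝ) * (((b - 1) * D : ℕ) : ℝ) := by rw [Nat.cast_mul]
  -- apply Eckart-Young
  obtain ⟨c, hc0, hc1, hcsum, hcle⟩ := ey μ hμ0 X
  set s : Fin d → ℝ := fun i => ∑ a : Fin p, c (a, i) with hsdef
  have hs0 : ∀ i, 0 ≤ s i := fun i => Finset.sum_nonneg fun a _ => hc0 _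
  have hs1 : ∀ i, s i ≤ (p : ℝ) := by
    intro i
    calc s i ≤ ∑ _a : Fin p, (1:ℝ) := Finset.sum_le_sum fun a _ => hc1 _
      _ = p := by simp
  have hssum : ∑ i, s i ≤ (p:ℝ) * (((b-1) * D : ℕ) : ℝ) := by
    have : ∑ i, s i = ∑ j, c j := by
      rw [hsdef, Fintype.sum_prod_type]
      exact Finset.sum_comm
    rw [this]
    exact le_trans hcsum hrk
  have hbath := bathtub lam hanti hnn (p:ℝ) (by positivity) ((b-1)*D) s hs0 hs1 hssum
  -- compute ∑ μ², ∑ μ² c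
  have hμsq : ∀ a : Fin p × Fin d, μ a ^ 2 = E / p * lam a.2 := by
    intro a
    rw [hμdef, mul_pow, mul_pow, Real.sq_sqrt hE0.le, Real.sq_sqrt (hnn _),
      ← Real.sqrt_inv, Real.sq_sqrt (by positivity)]
    ring
  have hμtot : ∑ j, μ j ^ 2 * (1 - c j) ≥ E - E / p * ∑ i, lam i * s i := by
    have h1 : ∑ j, μ j ^ 2 * (1 - c j) = ∑ j, μ j ^ 2 - ∑ j, μ j ^ 2 * c j := by
      rw [← Finset.sum_sub_distrib]
      exact Finset.sum_congr rfl fun j _ => by ring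
    have h2 : ∑ j : Fin p × Fin d, μ j ^ 2 = E := by
      rw [Finset.sum_congr rfl fun j _ => hμsq j, Fintype.sum_prod_type]
      simp only [Finset.sum_const, Finset.card_univ, Fintype.card_fin, nsmul_eq_mul]
      rw [← Finset.mul_sum, hsum]
      field_simp
    have h3 : ∑ j : Fin p × Fin d, μ j ^ 2 * c j = E / p * ∑ i, lam i * s i := by
      rw [Finset.sum_congr rfl fun j _ => by rw [hμsq j], Fintype.sum_prod_type,
        Finset.sum_comm, Finset.mul_sum]
      refine Finset.sum_congr rfl fun i _ => ?_
      have hsi : E / (p:ℝ) * (lam i * s i) = ∑ a : Fin p, E / (p:ℝ) * (lam i * c (a, i)) := by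
        have : s i = ∑ a : Fin p, c (a, i) := rfl
        rw [this, Finset.mul_sum, Finset.mul_sum]
      rw [hsi]
      exact Finset.sum_congr rfl fun a _ => by ring
    rw [h1, h2, h3]
  -- put everything together
  set T := ∑ i ∈ Finset.univ.filter (fun i : Fin d => (i : ℕ) < (b - 1) * D), lam i with hT
  have hET : E - E * T ≤ Δ ^ 2 := by
    have h4 : E / p * ∑ i, lam i * s i ≤ E / p * ((p:ℝ) * T) := by
      refine mul_le_mul_of_nonneg_left hbath (by positivity)
    have h5 : E / p * ((p:ℝ) * T) = E * T := by
      field_simp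
    nlinarith [le_trans hcle hfrob]
  have hED : 4 * Δ < Real.sqrt E := by linarith
  have hfrac : 1 - 2 * Δ / Real.sqrt E = (Real.sqrt E - 2 * Δ) / Real.sqrt E := by
    field_simp
  rw [hfrac, div_pow, div_le_iff₀ (by positivity)]
  nlinarith [Real.sq_sqrt hE0.le, mul_nonneg hΔ0 (by linarith : (0:ℝ) ≤ 4 * Real.sqrt E - 5 * Δ)]
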